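/- If k is an odd prime, then S(k) ≥ -(k-1)/2 + k·H(k) - (k-1)(k+1)/4, where H(k) := ∑_{1≤j≤k-1, j odd} 1/j. -/

import Mathlib

/-- `S(h,k) := ∑_{j=1}^{k-1} (-1)^{j+1+⌊hj/k⌋}` (here `h*j/k` is natural-number
division, which agrees with the floor of the rational `hj/k`). -/
def Spair (h k : ℕ) : ℤ := ∑ j ∈ Finset.Icc 1 (k - 1), (-1 : ℤ) ^ (j + 1 + h * j / k)

/-- `S(k) := ∑_{h=1}^{k-1} S(h,k)`. -/
def Ssum (k : ℕ) : ℤ := ∑ h ∈ Finset.Icc 1 (k - 1), Spair h k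

/-- `H(k) := ∑_{1 ≤ j ≤ k-1, j odd} 1/j`, a sum of real numbers. -/
noncomputable def H (k : ℕ) : ℝ :=
  ∑ j ∈ (Finset.Icc 1 (k - 1)).filter (fun j => Odd j), (1 : ℝ) / j

open Finset

-- (a+b)/c ≤ a/c + b/c + 1
lemma nat_div_add_le (a b c : ℕ) : (a + b) / c ≤ a / c + b / c + 1 := by
  rcases Nat.eq_zero_or_pos c with rfl | hc
  · simp
  have h1 := Nat.div_add_mod a c
  have h2 := Nat.div_add_mod b c
  have h3 : a % c < c := Nat.mod_lt _ hc
  have h4 : b % c < c := Nat.mod_lt _ hc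
  have e : (a / c + b / c + 2) * c = c * (a / c) + c * (b / c) + 2 * c := by ring
  have key : a + b < (a / c + b / c + 2) * c := by rw [e]; omega
  have := (Nat.div_lt_iff_lt_mul hc).2 key
  omega

lemma neg_one_pow_mod (a : ℕ) : (-1 : ℤ) ^ a = (-1) ^ (a % 2) := by
  conv_lhs => rw [← Nat.div_add_mod a 2]
  rw [pow_add, pow_mul]
  norm_num

lemma neg_one_pow_sum (a b : ℕ) (h : (a + b) % 2 = 1) : (-1 : ℤ) ^ a + (-1) ^ b = 0 := by
  rw [neg_one_pow_mod a, neg_one_pow_mod b]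
  have ha := Nat.mod_two_eq_zero_or_one a
  have hb := Nat.mod_two_eq_zero_or_one b
  rcases ha with h1 | h1 <;> rcases hb with h2 | h2 <;> rw [h1, h2] <;> norm_num <;> omega

lemma alt_sum_ge (c : ℕ → ℤ) (q : ℤ) (t : ℕ)
    (hub : ∀ m, 1 ≤ m → m ≤ 2 * t → c m ≤ q + 1)
    (hlb : ∀ m, 1 ≤ m → m ≤ 2 * t → q - 1 ≤ c m) :
    c 0 - 2 * t ≤ ∑ m ∈ Finset.range (2 * t + 1), (-1) ^ m * c m := by
  induction t with
  | zero => simp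
  | succ n ih =>
    have e : 2 * (n + 1) + 1 = (2 * n + 1) + 1 + 1 := by ring
    rw [e, Finset.sum_range_succ, Finset.sum_range_succ]
    have h1 := hub (2 * n + 1) (by omega) (by omega)
    have h2 := hlb (2 * n + 1 + 1) (by omega) (by omega)
    have ih' := ih (fun m hm1 hm2 => hub m hm1 (by omega)) (fun m hm1 hm2 => hlb m hm1 (by omega))
    have s1 : (-1 : ℤ) ^ (2 * n + 1) = -1 := Odd.neg_one_pow ⟨n, by ring⟩
    have s2 : (-1 : ℤ) ^ (2 * n + 1 + 1) = 1 := Even.neg_one_pow ⟨n + 1, by ring⟩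
    rw [s1, s2]
    push_cast
    linarith

lemma gauss_real (N : ℕ) : ∑ i ∈ Finset.range N, (i : ℝ) = N * (N - 1) / 2 := by
  induction N with
  | zero => simp
  | succ n ih => rw [Finset.sum_range_succ, ih]; push_cast; ring

lemma hj_div_lt {k h j : ℕ} (hk0 : 0 < k) (hh2 : h ≤ k - 1) (hj1 : 1 ≤ j) :
    h * j / k < j := by
  apply (Nat.div_lt_iff_lt_mul hk0).2
  have h1 : h * j ≤ (k - 1) * j := mul_le_mul_left hh2 j
  have h2 : (k - 1) * j < k * j := mul_lt_mul_of_pos_right (by omega) (by omega)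
  have h3 : k * j = j * k := mul_comm _ _
  omega

lemma reflect_div {k h j : ℕ} (hk : k.Prime) (hh1 : 1 ≤ h) (hh2 : h ≤ k - 1)
    (hj1 : 1 ≤ j) (hj2 : j ≤ k - 1) :
    (k - h) * j / k = j - 1 - h * j / k := by
  have hk0 : 0 < k := hk.pos
  have hk2 : 2 ≤ k := hk.two_le
  have hndvd : ¬ (k ∣ h * j) := by
    intro hdvd
    rcases (Nat.Prime.dvd_mul hk).mp hdvd with h' | h'
    · exact absurd (Nat.le_of_dvd (by omega) h') (by omega)
    · exact absurd (Nat.le_of_dvd (by omega) h') (by omega)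
  have hr1 : 1 ≤ h * j % k := by
    rcases Nat.eq_zero_or_pos (h * j % k) with h0 | h0
    · exact absurd (Nat.dvd_of_mod_eq_zero h0) hndvd
    · exact h0
  have hr2 : h * j % k < k := Nat.mod_lt _ hk0
  have e1 : k * (h * j / k) + h * j % k = h * j := Nat.div_add_mod _ _
  have hq : h * j / k < j := hj_div_lt hk0 hh2 hj1
  have P1 : (k - h) * j + h * j = k * j := by rw [← add_mul]; congr 1; omega
  have P2 : (j - 1 - h * j / k) * k + (h * j / k) * k + k = j * k := by
    rw [← add_mul, show (j - 1 - h * j / k + h * j / k) = j - 1 by omega,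
      show (j - 1) * k + k = (j - 1 + 1) * k by ring, show j - 1 + 1 = j by omega]
  have P3 : (h * j / k) * k = k * (h * j / k) := mul_comm _ _
  have P4 : j * k = k * j := mul_comm _ _
  have P5 : (j - 1 - h * j / k + 1) * k = (j - 1 - h * j / k) * k + k := by ring
  exact Nat.div_eq_of_lt_le (by omega) (by omega)

lemma col_even {k j : ℕ} (hk : k.Prime) (hodd : Odd k) (hj1 : 1 ≤ j) (hj2 : j ≤ k - 1)
    (hje : j % 2 = 0) :
    ∑ h ∈ Finset.Icc 1 (k - 1), (-1 : ℤ) ^ (j + 1 + h * j / k) = 0 := by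
  have hk0 : 0 < k := hk.pos
  have hk2 : 2 ≤ k := hk.two_le
  apply Finset.sum_involution (g := fun h _ => k - h)
  · intro a ha
    rw [Finset.mem_Icc] at ha
    have hq : a * j / k < j := hj_div_lt hk0 ha.2 hj1
    rw [reflect_div hk ha.1 ha.2 hj1 hj2]
    exact neg_one_pow_sum _ _ (by omega)
  · intro a ha _
    rw [Finset.mem_Icc] at ha
    rcases hodd with ⟨m, hm⟩
    omega
  · intro a ha
    rw [Finset.mem_Icc] at ha ⊢
    omega
  · intro a ha
    rw [Finset.mem_Icc] at ha
    omega

lemma col_odd {k j : ℕ} (hj : j % 2 = 1) :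
    ∑ h ∈ Finset.Icc 1 (k - 1), (-1 : ℤ) ^ (j + 1 + h * j / k)
      = ∑ h ∈ Finset.Icc 1 (k - 1), (-1 : ℤ) ^ (h * j / k) := by
  apply Finset.sum_congr rfl
  intro h _
  rw [pow_add, Even.neg_one_pow ⟨(j + 1) / 2, by omega⟩, one_mul]

lemma col_lb {k j : ℕ} (hk : k.Prime) (hj1 : 1 ≤ j) (hj2 : j ≤ k - 1) (hjo : j % 2 = 1) :
    ((k / j : ℕ) : ℤ) - (j : ℤ) ≤ ∑ h ∈ Finset.Icc 1 (k - 1), (-1 : ℤ) ^ (h * j / k) := by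
  classical
  have hk0 : 0 < k := hk.pos
  have hk2 : 2 ≤ k := hk.two_le
  have hj0 : 0 < j := hj1
  set s := Finset.Icc 1 (k - 1) with hs
  have hq1 : 1 ≤ k / j := (Nat.one_le_div_iff (by omega)).2 (by omega)
  have hqj : k / j * j ≤ k := Nat.div_mul_le_self k j
  obtain ⟨q, hqdef⟩ : ∃ q, q = k / j := ⟨_, rfl⟩
  rw [← hqdef] at hq1 hqj ⊢
  have maps : ∀ h ∈ s, h * j / k ∈ Finset.range j := by
    intro h hh
    rw [hs, Finset.mem_Icc] at hh
    rw [Finset.mem_range]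
    exact hj_div_lt hk0 hh.2 hj1
  set c : ℕ → ℕ := fun m => (s.filter (fun h => h * j / k = m)).card with hc
  have inner : ∀ m : ℕ, ∑ h ∈ s.filter (fun h => h * j / k = m), (-1 : ℤ) ^ (h * j / k)
      = (-1) ^ m * (c m : ℤ) := by
    intro m
    have : ∀ h ∈ s.filter (fun h => h * j / k = m), (-1 : ℤ) ^ (h * j / k) = (-1) ^ m := by
      intro h hh
      rw [(Finset.mem_filter.mp hh).2]
    rw [Finset.sum_congr rfl this, Finset.sum_const, nsmul_eq_mul, mul_comm, hc]
  -- lower bound on fibers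
  have hlb : ∀ m, m < j → q - 1 ≤ c m := by
    intro m hm
    have F1 : j * (m * k / j) + m * k % j = m * k := Nat.div_add_mod _ _
    have F2 : m * k % j < j := Nat.mod_lt _ (by omega)
    obtain ⟨a, ha⟩ : ∃ a, a = m * k / j := ⟨_, rfl⟩
    rw [← ha] at F1
    have hsub : Finset.Icc (a + 1) (a + (q - 1)) ⊆ s.filter (fun h => h * j / k = m) := by
      intro h hh
      rw [Finset.mem_Icc] at hh
      obtain ⟨hl, hr⟩ := hh
      have F3 : (a + 1) * j ≤ h * j := mul_le_mul_left hl j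
      have F4 : (a + 1) * j = a * j + j := by ring
      have F5 : a * j = j * a := mul_comm _ _
      have G1 : m * k ≤ h * j := by omega
      have F6a : h * j ≤ (a + (q - 1)) * j := mul_le_mul_left hr j
      have F6b : (a + (q - 1)) * j = a * j + (q - 1) * j := by rw [add_mul]
      have F6c : (q - 1 + 1) * j = q * j := by congr 1; omega
      have F6d : (q - 1 + 1) * j = (q - 1) * j + j := by ring
      have F8 : (m + 1) * k = m * k + k := by ring
      have G2 : h * j < (m + 1) * k := by omega
      have hmem : h ∈ s := by
        have hjk : (m + 1) * k ≤ j * k := mul_le_mul_left (by omega) k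
        have hcomm : j * k = k * j := mul_comm _ _
        have hlt : h * j < k * j := by omega
        have : h < k := lt_of_mul_lt_mul_right hlt (Nat.zero_le j)
        rw [hs, Finset.mem_Icc]
        omega
      rw [Finset.mem_filter]
      exact ⟨hmem, Nat.div_eq_of_lt_le G1 G2⟩
    have hcard := Finset.card_le_card hsub
    rw [Nat.card_Icc] at hcard
    show q - 1 ≤ (s.filter (fun h => h * j / k = m)).card
    omega
  -- upper bound on fibers
  have hub : ∀ m, 1 ≤ m → m < j → c m ≤ q + 1 := by
    intro m hm1 hm2
    have hco : Nat.Coprime j k := by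
      have : ¬ (k ∣ j) := fun hd => by
        have := Nat.le_of_dvd hj0 hd
        omega
      exact ((Nat.Prime.coprime_iff_not_dvd hk).2 this).symm
    have hndvd : ¬ j ∣ m * k := by
      intro hd
      have := Nat.Coprime.dvd_of_dvd_mul_right hco hd
      have := Nat.le_of_dvd (by omega) this
      omega
    have F1 : j * (m * k / j) + m * k % j = m * k := Nat.div_add_mod _ _
    have F2 : m * k % j < j := Nat.mod_lt _ (by omega)
    obtain ⟨a, ha⟩ : ∃ a, a = m * k / j := ⟨_, rfl⟩
    rw [← ha] at F1
    have hA := nat_div_add_le (m * k) (k - 1) j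
    have hB : (k - 1) / j ≤ k / j := Nat.div_le_div_right (by omega)
    obtain ⟨b, hb⟩ : ∃ b, b = (m * k + (k - 1)) / j := ⟨_, rfl⟩
    obtain ⟨e, he⟩ : ∃ e, e = (k - 1) / j := ⟨_, rfl⟩
    rw [← hb, ← he, ← ha] at hA
    rw [← he, ← hqdef] at hB
    have hrdvd : m * k % j ≠ 0 := by
      intro h0
      exact hndvd (Nat.dvd_of_mod_eq_zero h0)
    have hsub : s.filter (fun h => h * j / k = m) ⊆ Finset.Icc (a + 1) b := by
      intro h hh
      rw [Finset.mem_filter, hs, Finset.mem_Icc] at hh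
      obtain ⟨⟨hh1, hh2⟩, h3⟩ := hh
      have e0 : k * (h * j / k) + h * j % k = h * j := Nat.div_add_mod _ _
      rw [h3] at e0
      have emod : h * j % k < k := Nat.mod_lt _ hk0
      have hcomm : m * k = k * m := mul_comm _ _
      have hcomm2 : j * h = h * j := mul_comm _ _
      have hstrict : k * m < h * j := by
        rcases Nat.lt_or_ge (k * m) (h * j) with h' | h'
        · exact h'
        · exfalso
          exact hndvd ⟨h, by omega⟩
      have hlow : a + 1 ≤ h := by
        by_contra hno
        push_neg at hno
        have h5 : h * j ≤ a * j := mul_le_mul_left (by omega) j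
        have h6 : a * j = j * a := mul_comm _ _
        omega
      have hhigh : h ≤ b := by
        rw [hb, Nat.le_div_iff_mul_le hj0]
        omega
      rw [Finset.mem_Icc]
      exact ⟨hlow, hhigh⟩
    have hcard := Finset.card_le_card hsub
    rw [Nat.card_Icc] at hcard
    show (s.filter (fun h => h * j / k = m)).card ≤ q + 1
    omega
  -- assemble
  rw [← Finset.sum_fiberwise_of_maps_to maps, Finset.sum_congr rfl (fun m _ => inner m)]
  obtain ⟨t, ht⟩ : ∃ t, j = 2 * t + 1 := ⟨j / 2, by omega⟩
  rw [ht]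
  have key := alt_sum_ge (fun m => (c m : ℤ)) (q : ℤ) t
    (fun m hm1 hm2 => by
      have := hub m hm1 (by omega)
      push_cast
      omega)
    (fun m hm1 hm2 => by
      have := hlb m (by omega)
      push_cast
      omega)
  have h0 := hlb 0 (by omega)
  have hstep : (q : ℤ) - ((2 * t + 1 : ℕ) : ℤ) ≤ (c 0 : ℤ) - 2 * (t : ℤ) := by
    push_cast
    omega
  exact le_trans hstep key

theorem stmt_7 (k : ℕ) (hk : k.Prime) (hodd : Odd k) :
    (Ssum k : ℝ) ≥ -((k : ℝ) - 1) / 2 + k * H k - ((k : ℝ) - 1) * ((k : ℝ) + 1) / 4 := by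
  classical
  have hk2 : 2 ≤ k := hk.two_le
  obtain ⟨n, hn⟩ : ∃ n, k = 2 * n + 1 := by
    rcases hodd with ⟨m, hm⟩
    exact ⟨m, by omega⟩
  have hn1 : 1 ≤ n := by omega
  set O := (Finset.Icc 1 (k - 1)).filter (fun j => Odd j) with hO
  have e1 : Ssum k = ∑ j ∈ Finset.Icc 1 (k - 1),
      ∑ h ∈ Finset.Icc 1 (k - 1), (-1 : ℤ) ^ (j + 1 + h * j / k) := by
    simp only [Ssum, Spair]
    rw [Finset.sum_comm]
  have esplit := Finset.sum_filter_add_sum_filter_not (Finset.Icc 1 (k - 1)) (fun j => Odd j)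
    (fun j => ∑ h ∈ Finset.Icc 1 (k - 1), (-1 : ℤ) ^ (j + 1 + h * j / k))
  have heven : ∑ j ∈ (Finset.Icc 1 (k - 1)).filter (fun j => ¬ Odd j),
      ∑ h ∈ Finset.Icc 1 (k - 1), (-1 : ℤ) ^ (j + 1 + h * j / k) = 0 := by
    apply Finset.sum_eq_zero
    intro j hj
    rw [Finset.mem_filter, Finset.mem_Icc] at hj
    exact col_even hk hodd hj.1.1 hj.1.2 (Nat.not_odd_iff.mp hj.2)
  have e2 : Ssum k = ∑ j ∈ O, ∑ h ∈ Finset.Icc 1 (k - 1), (-1 : ℤ) ^ (h * j / k) := by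
    rw [e1, ← esplit, heven, add_zero, hO]
    apply Finset.sum_congr rfl
    intro j hj
    rw [Finset.mem_filter] at hj
    exact col_odd (Nat.odd_iff.mp hj.2)
  have e3 : ∑ j ∈ O, (((k / j : ℕ) : ℤ) - (j : ℤ)) ≤ Ssum k := by
    rw [e2]
    apply Finset.sum_le_sum
    intro j hj
    rw [hO, Finset.mem_filter, Finset.mem_Icc] at hj
    exact col_lb hk hj.1.1 hj.1.2 (Nat.odd_iff.mp hj.2)
  have e4 : ∑ j ∈ O, (((k / j : ℕ) : ℝ) - (j : ℝ)) ≤ (Ssum k : ℝ) := by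
    have h2 : ((∑ j ∈ O, (((k / j : ℕ) : ℤ) - (j : ℤ)) : ℤ) : ℝ) ≤ ((Ssum k : ℤ) : ℝ) := by
      exact_mod_cast e3
    push_cast at h2
    exact h2
  have e5 : ∀ j ∈ O, (k : ℝ) / j - 1 ≤ ((k / j : ℕ) : ℝ) := by
    intro j hj
    rw [hO, Finset.mem_filter, Finset.mem_Icc] at hj
    obtain ⟨⟨hj1, hj2⟩, _⟩ := hj
    have hd : j * (k / j) + k % j = k := Nat.div_add_mod _ _
    have hm : k % j < j := Nat.mod_lt _ (by omega)
    have hjpos : (0 : ℝ) < j := by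
      have : (1 : ℝ) ≤ (j : ℝ) := by exact_mod_cast hj1
      linarith
    rw [sub_le_iff_le_add, div_le_iff₀ hjpos]
    have hcast : (k : ℝ) ≤ (j : ℝ) * ((k / j : ℕ) : ℝ) + (j : ℝ) := by
      exact_mod_cast (by omega : k ≤ j * (k / j) + j)
    nlinarith
  have hH : ∑ j ∈ O, (k : ℝ) / j = (k : ℝ) * H k := by
    rw [H, hO, Finset.mul_sum]
    apply Finset.sum_congr rfl
    intro j _
    rw [mul_one_div]
  have hOim : O = Finset.image (fun i => 2 * i + 1) (Finset.range n) := by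
    rw [hO]
    ext j
    simp only [Finset.mem_filter, Finset.mem_Icc, Finset.mem_image, Finset.mem_range]
    constructor
    · rintro ⟨⟨ha, hb⟩, m, hm⟩
      exact ⟨m, by omega, by omega⟩
    · rintro ⟨i, hi, rfl⟩
      exact ⟨⟨by omega, by omega⟩, ⟨i, by omega⟩⟩
  have hsum1 : ∑ j ∈ O, (1 + (j : ℝ)) = (n : ℝ) ^ 2 + (n : ℝ) := by
    rw [hOim, Finset.sum_image (fun a _ b _ hab => by omega)]
    have hcong : ∀ i ∈ Finset.range n, (1 + ((2 * i + 1 : ℕ) : ℝ)) = 2 * (i : ℝ) + 2 := by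
      intro i _
      push_cast
      ring
    rw [Finset.sum_congr rfl hcong]
    have hsplit : ∑ i ∈ Finset.range n, (2 * (i : ℝ) + 2)
        = 2 * (∑ i ∈ Finset.range n, (i : ℝ)) + 2 * n := by
      rw [Finset.sum_add_distrib, ← Finset.mul_sum, Finset.sum_const, Finset.card_range,
        nsmul_eq_mul]
      ring
    rw [hsplit, gauss_real]
    ring
  have hk' : (k : ℝ) = 2 * (n : ℝ) + 1 := by
    rw [hn]
    push_cast
    ring
  rw [ge_iff_le]
  have hnn : (0 : ℝ) ≤ (n : ℝ) := by positivity
  calc -((k : ℝ) - 1) / 2 + k * H k - ((k : ℝ) - 1) * ((k : ℝ) + 1) / 4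
      = (k : ℝ) * H k - ((n : ℝ) ^ 2 + 2 * n) := by rw [hk']; ring
    _ ≤ (k : ℝ) * H k - ((n : ℝ) ^ 2 + n) := by linarith
    _ = ∑ j ∈ O, (k : ℝ) / j - ∑ j ∈ O, (1 + (j : ℝ)) := by rw [hH, hsum1]
    _ = ∑ j ∈ O, ((k : ℝ) / j - (1 + (j : ℝ))) := (Finset.sum_sub_distrib _ _).symm
    _ ≤ ∑ j ∈ O, (((k / j : ℕ) : ℝ) - (j : ℝ)) := by
        apply Finset.sum_le_sum
        intro j hj
        have := e5 j hj
        linarith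
    _ ≤ (Ssum k : ℝ) := e4
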